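/- Let {Π_i}_{i∈I} be a finite family of orthogonal projections on a Hilbert space indexed by an abelian group I. Then ‖Σ_{i∈I} Π_i‖ ≤ Σ_{δ∈I} max_{i∈I} ‖Π_i Π_{i+δ}‖. -/

import Mathlib

open Matrix BigOperators Kronecker
open scoped ComplexOrder

/-- Operator (spectral) norm of a complex matrix. -/
noncomputable def opNorm {E : Type} [Fintype E] [DecidableEq E] (A : Matrix E E ℂ) : ℝ :=
  ‖(Matrix.toEuclideanCLM (𝕜 := ℂ) A : EuclideanSpace ℂ E →L[ℂ] EuclideanSpace ℂ E)‖

/-- An orthogonal projection. -/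
def IsProjection {E : Type} [Fintype E] [DecidableEq E] (P : Matrix E E ℂ) : Prop :=
  P.IsHermitian ∧ P * P = P

/-- A cq-state, given as the family of (subnormalized) conditional operators
`ρ x = P_X(x) • ρ_E^x`; each is PSD and the traces sum to 1. -/
def IsCQState {X E : Type} [Fintype X] [Fintype E] (ρ : X → Matrix E E ℂ) : Prop :=
  (∀ x, (ρ x).PosSemidef) ∧ ∑ x, (ρ x).trace = 1

/-- A POVM with outcomes in `X` on the system `E`. -/
def IsPOVM {X E : Type} [Fintype X] [Fintype E] [DecidableEq E] (M : X → Matrix E E ℂ) : Prop :=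
  (∀ x, (M x).PosSemidef) ∧ ∑ x, M x = 1

/-- The guessing probability `Guess(X|E)` of the classical value of a cq-state:
the supremum over POVMs of the probability of the measurement outcome being `X`. -/
noncomputable def guessProb {X E : Type} [Fintype X] [Fintype E] [DecidableEq E]
    (ρ : X → Matrix E E ℂ) : ℝ :=
  sSup {g | ∃ M : X → Matrix E E ℂ, IsPOVM M ∧ g = (∑ x, (M x * ρ x).trace).re}

/-- The guessing probability `Guess(X|ZE)` with additional classical side information `Z`:
the supremum over measurements of `E` controlled by `Z`. -/
noncomputable def guessProbC {X Z E : Type} [Fintype X] [Fintype Z] [Fintype E] [DecidableEq E]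
    (ρ : X → Z → Matrix E E ℂ) : ℝ :=
  sSup {g | ∃ M : Z → X → Matrix E E ℂ, (∀ z, IsPOVM (M z)) ∧
    g = (∑ x, ∑ z, (M z x * ρ x z).trace).re}

/-- Trace norm `‖A‖₁ = tr √(AᴴA)`. -/
noncomputable def traceNorm {E : Type} [Fintype E] [DecidableEq E] (A : Matrix E E ℂ) : ℝ :=
  (((Matrix.posSemidef_conjTranspose_mul_self A).1.eigenvectorUnitary : Matrix E E ℂ) *
    Matrix.diagonal (fun i => ((√((Matrix.posSemidef_conjTranspose_mul_self A).1.eigenvalues i) : ℝ) : ℂ)) *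
    (star (Matrix.posSemidef_conjTranspose_mul_self A).1.eigenvectorUnitary : Matrix E E ℂ)).trace.re

/-- A CPTP map between matrix algebras: completely positive (all finite ampliations
are positivity-preserving) and trace-preserving. -/
def IsCPTP {E F : Type} [Fintype E] [DecidableEq E] [Fintype F] [DecidableEq F]
    (Q : Matrix E E ℂ →ₗ[ℂ] Matrix F F ℂ) : Prop :=
  (∀ k : ℕ, ∀ ρ : Matrix (E × Fin k) (E × Fin k) ℂ, ρ.PosSemidef →
    (Matrix.of fun p q : F × Fin k =>
      Q (Matrix.of fun a b => ρ (a, p.2) (b, q.2)) p.1 q.1).PosSemidef) ∧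
  ∀ ρ, (Q ρ).trace = ρ.trace

/-- The BB84 state vector `H^θ |x⟩` on `n` qubits. -/
noncomputable def bb84v {n : ℕ} (θ x : Fin n → ZMod 2) : (Fin n → ZMod 2) → ℂ :=
  fun y => ∏ i, (if θ i = 0 then (if y i = x i then 1 else 0)
    else ((-1 : ℂ) ^ ((x i).val * (y i).val) / Real.sqrt 2))

/-- The rank-one projection `H^θ |x⟩⟨x| H^θ`. -/
noncomputable def bb84proj {n : ℕ} (θ x : Fin n → ZMod 2) :
    Matrix (Fin n → ZMod 2) (Fin n → ZMod 2) ℂ :=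
  Matrix.vecMulVec (bb84v θ x) (fun y => star (bb84v θ x y))

/-- Partial trace over the first tensor factor. -/
noncomputable def ptr {A B : Type} [Fintype A] (M : Matrix (A × B) (A × B) ℂ) :
    Matrix B B ℂ :=
  Matrix.of fun b b' => ∑ a, M (a, b) (a, b')

/-- The Hamming ball of radius `φ·n` around `0` in `{0,1}^n`. -/
noncomputable def hammingBall (n : ℕ) (φ : ℝ) : Finset (Fin n → ZMod 2) :=
  @Finset.filter _ (fun e => (hammingDist e (0 : Fin n → ZMod 2) : ℝ) ≤ φ * n)
    (Classical.decPred _) Finset.univ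

/-- Binary entropy in bits. -/
noncomputable def binEnt (φ : ℝ) : ℝ := Real.binEntropy φ / Real.log 2

/-- Message-independence of a keyed hash function: the distribution of `H(K,x)` for
uniform `K` does not depend on `x`. -/
def MessageIndependent {K X Y : Type} [Fintype K] [DecidableEq Y] (H : K → X → Y) : Prop :=
  ∀ x x' y, (Finset.univ.filter fun k => H k x = y).card =
    (Finset.univ.filter fun k => H k x' = y).card

/-- Uniformity: `H(K,x)` is uniformly distributed on `Y`, independently of `x`. -/
def UniformHash {K X Y : Type} [Fintype K] [Fintype Y] [DecidableEq Y] (H : K → X → Y) : Prop :=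
  (∀ x x' y, (Finset.univ.filter fun k => H k x = y).card =
    (Finset.univ.filter fun k => H k x' = y).card) ∧
  ∀ x y, (Finset.univ.filter fun k => H k x = y).card * Fintype.card Y = Fintype.card K

/-- `δ(K, U_K | Y E)`: trace distance of a ccq-state `ρ_{KYE}` (classical `K`, `Y`) from the
corresponding state with `K` replaced by a fresh uniform key. -/
noncomputable def deltaKeyUniform {K Y E : Type} [Fintype K] [Fintype Y] [Fintype E]
    [DecidableEq E] (ρ : K → Y → Matrix E E ℂ) : ℝ :=
  (1/2) * ∑ k : K, ∑ y : Y, traceNorm (ρ k y - (Fintype.card K : ℝ)⁻¹ • ∑ k', ρ k' y)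

/-- `ν`-key-privacy of a keyed hash function `H`: for every state `ρ_{KXYE}` with
`ρ_{KX} = μ_K ⊗ ρ_X`, `Y = H(K,X)` and Markov chain `K ↔ XY ↔ E`,
the key is `ν/2·√(Guess(X|YE)·|Y|)`-close to uniform given `Y` and `E`. -/
def KeyPrivacy {K X Y : Type} [Fintype K] [Fintype X] [Fintype Y] [DecidableEq Y]
    (ν : ℝ) (H : K → X → Y) : Prop :=
  ∀ (E : Type) [Fintype E] [DecidableEq E], ∀ ρ : K → X → Matrix E E ℂ,
    (∀ k x, (ρ k x).PosSemidef) →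
    (∑ k, ∑ x, (ρ k x).trace) = 1 →
    (∀ k x, (ρ k x).trace = (Fintype.card K : ℂ)⁻¹ * ∑ k', (ρ k' x).trace) →
    (∃ (p : K → X → ℝ) (σ : X → Y → Matrix E E ℂ), (∀ k x, 0 ≤ p k x) ∧
      ∀ k x, ρ k x = p k x • σ x (H k x)) →
    deltaKeyUniform (fun k y => ∑ x, if H k x = y then ρ k x else 0) ≤
      (ν/2) * Real.sqrt (guessProbC (fun x y => ∑ k, if H k x = y then ρ k x else 0) *
        (Fintype.card Y))

/-- for a finite family of orthogonal projections indexed by an abelian group,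
`‖Σ_i Π_i‖ ≤ Σ_δ max_i ‖Π_i Π_{i+δ}‖`. -/
theorem projection_sum_opNorm_bound {I E : Type} [Fintype I] [AddCommGroup I]
    [Fintype E] [DecidableEq E]
    (P : I → Matrix E E ℂ) (hP : ∀ i, IsProjection (P i)) :
    opNorm (∑ i, P i) ≤ ∑ δ : I, ⨆ i : I, opNorm (P i * P (i + δ)) := by
  set T : I → (EuclideanSpace ℂ E →L[ℂ] EuclideanSpace ℂ E) :=
    fun i => Matrix.toEuclideanCLM (𝕜 := ℂ) (P i) with hT
  have hsym : ∀ i, ∀ x y : EuclideanSpace ℂ E,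
      inner ℂ (T i x) y = (inner ℂ x (T i y) : ℂ) := fun i =>
    (Matrix.isHermitian_iff_isSymmetric.mp (hP i).1)
  have hidem : ∀ i, ∀ x, T i (T i x) = T i x := by
    intro i x
    have := congrArg (fun M => Matrix.toEuclideanCLM (𝕜 := ℂ) M x) (hP i).2
    simpa [_root_.map_mul] using this
  set c : I → ℝ := fun δ => ⨆ i : I, opNorm (P i * P (i + δ)) with hc
  set C : ℝ := ∑ δ : I, c δ with hC
  have hopnn : ∀ A : Matrix E E ℂ, 0 ≤ opNorm A := fun A => norm_nonneg _
  have hcnn : ∀ δ, 0 ≤ c δ := fun δ => Real.iSup_nonneg fun i => hopnn _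
  have hcle : ∀ δ i, opNorm (P i * P (i + δ)) ≤ c δ := fun δ i =>
    le_ciSup (f := fun i => opNorm (P i * P (i + δ)))
      (Set.Finite.bddAbove (Set.finite_range _)) i
  have hCnn : 0 ≤ C := Finset.sum_nonneg fun δ _ => hcnn δ
  rw [opNorm]
  apply ContinuousLinearMap.opNorm_le_bound _ hCnn
  intro v
  set f := Matrix.toEuclideanCLM (𝕜 := ℂ) (∑ i, P i) with hf
  have hfv : f v = ∑ i, T i v := by
    rw [hf, map_sum]; simp [T]
  set w : I → EuclideanSpace ℂ E := fun i => T i v with hw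
  set S : ℝ := ∑ i, ‖w i‖^2 with hS
  -- step 1 : S = re ⟪v, f v⟫
  have hstep1 : S = (inner ℂ v (f v) : ℂ).re := by
    rw [hfv, inner_sum, Complex.re_sum]
    apply Finset.sum_congr rfl
    intro i _
    have h2 : (inner ℂ v (T i v) : ℂ) = inner ℂ (w i) (w i) := by
      calc (inner ℂ v (T i v) : ℂ) = inner ℂ v (T i (T i v)) := by rw [hidem]
        _ = inner ℂ (T i v) (T i v) := (hsym i v (T i v)).symm
    rw [h2, inner_self_eq_norm_sq_to_K (𝕜 := ℂ)]
    simp [← Complex.ofReal_pow]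
  -- step 2 : pair bound
  have hpair : ∀ i j : I, ‖(inner ℂ (w i) (w j) : ℂ)‖ ≤ opNorm (P i * P j) * (‖w i‖ * ‖w j‖) := by
    intro i j
    have h1 : (inner ℂ (w i) (w j) : ℂ)
        = inner ℂ (w i) ((Matrix.toEuclideanCLM (𝕜 := ℂ) (P i * P j)) (w j)) := by
      rw [_root_.map_mul]
      calc (inner ℂ (w i) (w j) : ℂ) = inner ℂ (T i (w i)) (T j (w j)) := by
            rw [hw]; simp only []; rw [hidem, hidem]
        _ = inner ℂ (w i) (T i (T j (w j))) := hsym i _ _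
        _ = _ := rfl
    rw [h1]
    calc ‖(inner ℂ (w i) ((Matrix.toEuclideanCLM (𝕜 := ℂ) (P i * P j)) (w j)) : ℂ)‖
        ≤ ‖w i‖ * ‖(Matrix.toEuclideanCLM (𝕜 := ℂ) (P i * P j)) (w j)‖ := norm_inner_le_norm _ _
      _ ≤ ‖w i‖ * (opNorm (P i * P j) * ‖w j‖) :=
          mul_le_mul_of_nonneg_left ((Matrix.toEuclideanCLM (𝕜 := ℂ) (P i * P j)).le_opNorm _)
            (norm_nonneg _)
      _ = opNorm (P i * P j) * (‖w i‖ * ‖w j‖) := by ring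
  -- shift invariance of ∑ ‖w i‖²
  have hshift : ∀ δ : I, ∑ i, ‖w (i + δ)‖^2 = S := by
    intro δ
    exact Equiv.sum_comp (Equiv.addRight δ) (fun i => ‖w i‖^2)
  -- step 3 : ‖f v‖² ≤ C * S
  have hnormsq : ‖f v‖^2 ≤ C * S := by
    have h0 : ‖f v‖^2 = (inner ℂ (f v) (f v) : ℂ).re := by
      rw [inner_self_eq_norm_sq_to_K (𝕜 := ℂ)]; simp [← Complex.ofReal_pow]
    have hexp : (inner ℂ (f v) (f v) : ℂ).re = ∑ δ : I, ∑ i, (inner ℂ (w i) (w (i + δ)) : ℂ).re := by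
      rw [hfv, inner_sum, Complex.re_sum]
      have : ∀ j : I, (inner ℂ (∑ i, T i v) (T j v) : ℂ).re = ∑ i, (inner ℂ (w i) (w j) : ℂ).re := by
        intro j; rw [sum_inner, Complex.re_sum]
      rw [Finset.sum_congr rfl fun j _ => this j]
      calc ∑ j : I, ∑ i : I, (inner ℂ (w i) (w j) : ℂ).re
          = ∑ i : I, ∑ j : I, (inner ℂ (w i) (w j) : ℂ).re := Finset.sum_comm
        _ = ∑ i : I, ∑ δ : I, (inner ℂ (w i) (w (i + δ)) : ℂ).re :=
            Finset.sum_congr rfl fun i _ =>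
              (Equiv.sum_comp (Equiv.addLeft i) (fun j => (inner ℂ (w i) (w j) : ℂ).re)).symm
        _ = ∑ δ : I, ∑ i : I, (inner ℂ (w i) (w (i + δ)) : ℂ).re := Finset.sum_comm
    rw [h0, hexp, hC, Finset.sum_mul]
    apply Finset.sum_le_sum
    intro δ _
    calc ∑ i, (inner ℂ (w i) (w (i + δ)) : ℂ).re
        ≤ ∑ i, c δ * (‖w i‖ * ‖w (i + δ)‖) := by
          apply Finset.sum_le_sum
          intro i _
          calc (inner ℂ (w i) (w (i + δ)) : ℂ).re ≤ ‖(inner ℂ (w i) (w (i + δ)) : ℂ)‖ :=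
                Complex.re_le_norm _
            _ ≤ opNorm (P i * P (i + δ)) * (‖w i‖ * ‖w (i + δ)‖) := hpair i (i + δ)
            _ ≤ c δ * (‖w i‖ * ‖w (i + δ)‖) :=
                mul_le_mul_of_nonneg_right (hcle δ i)
                  (mul_nonneg (norm_nonneg _) (norm_nonneg _))
      _ = c δ * ∑ i, ‖w i‖ * ‖w (i + δ)‖ := by rw [Finset.mul_sum]
      _ ≤ c δ * S := by
          apply mul_le_mul_of_nonneg_left _ (hcnn δ)
          calc ∑ i, ‖w i‖ * ‖w (i + δ)‖ ≤ ∑ i, (‖w i‖^2 + ‖w (i + δ)‖^2) / 2 := by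
                apply Finset.sum_le_sum
                intro i _
                nlinarith [sq_nonneg (‖w i‖ - ‖w (i + δ)‖)]
            _ = S := by
                rw [← Finset.sum_div, Finset.sum_add_distrib, hshift δ, ← hS]
                ring
  -- step 4 : conclude
  have hSle : S ≤ ‖v‖ * ‖f v‖ := by
    rw [hstep1]
    calc (inner ℂ v (f v) : ℂ).re ≤ ‖(inner ℂ v (f v) : ℂ)‖ := Complex.re_le_norm _
      _ ≤ ‖v‖ * ‖f v‖ := norm_inner_le_norm _ _
  have key : ‖f v‖^2 ≤ C * (‖v‖ * ‖f v‖) :=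
    le_trans hnormsq (mul_le_mul_of_nonneg_left hSle hCnn)
  rcases eq_or_lt_of_le (norm_nonneg (f v)) with h0 | h0
  · rw [← h0]; positivity
  · nlinarith
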